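/- Define φ : S¹ → F₂(2) (where S¹ = [−1,1]/(−1∼1)) by: for −1 < τ < 0, φ(τ) is the configuration (I₁ = [−1,τ]∪[1+τ,1], I₂ = [τ,1+τ]); for 0 < τ < 1, φ(τ) = (I₁ = [τ−1,τ], I₂ = [−1,τ−1]∪[τ,1]); φ(0) = ([−1,0],[0,1]); φ(±1) = ([0,1],[−1,0]). Then φ is a bijection (in fact a homeomorphism) from S¹ onto the space F₂(2) of pairs (I₁,I₂) of 1-submanifolds of the circle with disjoint interiors, equal length 1, union S¹, and associated word of complexity ≤ 2. -/

import Mathlib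

open MeasureTheory

instance : Fact ((0 : ℝ) < 2) := ⟨by norm_num⟩

/-- The quotient map from `ℝ` to the circle `S¹ = ℝ/2ℤ ≅ [−1,1]/(−1∼1)`. -/
noncomputable def cir (τ : ℝ) : AddCircle (2 : ℝ) := (τ : AddCircle (2 : ℝ))

/-- The space `F₂(2)` (denoted `ℐ₂(2)` in the paper): pairs `(I₁, I₂)` of closed
connected 1-submanifolds (arcs) of the circle with disjoint interiors, union the whole
circle, and equal length; connectedness encodes the complexity ≤ 2 condition on the
associated two-letter word. -/
def F22 : Set (Set (AddCircle (2 : ℝ)) × Set (AddCircle (2 : ℝ))) :=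
  {q | IsClosed q.1 ∧ IsClosed q.2 ∧ q.1 ∪ q.2 = Set.univ ∧
       interior q.1 ∩ interior q.2 = ∅ ∧ IsConnected q.1 ∧ IsConnected q.2 ∧
       volume q.1 = volume q.2}

/-- The map `φ : S¹ → F₂(2)`: in the uniform description,
`φ(τ) = (I₁, I₂)` with `I₁` the arc `[τ−1, τ]` and `I₂` the arc `[τ, τ+1]`
(this agrees with the case-by-case formulas for `−1 < τ < 0`, `0 < τ < 1`, `τ = 0`,
`τ = ±1`). -/
noncomputable def PhiMap (τ : ℝ) :
    Set (AddCircle (2 : ℝ)) × Set (AddCircle (2 : ℝ)) :=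
  (cir '' Set.Icc (τ - 1) τ, cir '' Set.Icc τ (τ + 1))

open Set

/-! ### Auxiliary lemmas -/

lemma cir_continuous : Continuous cir := continuous_quotient_mk'

lemma cir_eq_cir_iff {s t : ℝ} : cir s = cir t ↔ ∃ k : ℤ, s = t + 2 * k := by
  unfold cir
  rw [QuotientAddGroup.eq_iff_sub_mem, AddSubgroup.mem_zmultiples_iff]
  constructor
  · rintro ⟨k, hk⟩
    exact ⟨k, by push_cast [zsmul_eq_mul] at hk; linarith⟩
  · rintro ⟨k, hk⟩
    exact ⟨k, by push_cast [zsmul_eq_mul]; linarith⟩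

lemma cir_shift (t : ℝ) (k : ℤ) : cir (t + 2 * k) = cir t := cir_eq_cir_iff.mpr ⟨k, rfl⟩

lemma image_Icc_shift (s t : ℝ) (k : ℤ) :
    cir '' Icc (s + 2 * k) (t + 2 * k) = cir '' Icc s t := by
  rw [← image_add_const_Icc, Set.image_image]
  exact Set.image_congr fun x _ => cir_shift x k

lemma image_Icc_of_eq {u v : ℝ} (h : cir u = cir v) (c : ℝ) :
    cir '' Icc u (u + c) = cir '' Icc v (v + c) := by
  obtain ⟨k, rfl⟩ := cir_eq_cir_iff.mp h
  rw [show v + 2 * (k : ℝ) + c = (v + c) + 2 * k by ring]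
  exact image_Icc_shift v (v + c) k

lemma cir_equivIco (z : ℝ) (y : AddCircle (2:ℝ)) :
    cir ((AddCircle.equivIco 2 z y : ℝ)) = y :=
  (AddCircle.equivIco 2 z).symm_apply_apply y

lemma cir_equivIoc (z : ℝ) (y : AddCircle (2:ℝ)) :
    cir ((AddCircle.equivIoc 2 z y : ℝ)) = y :=
  (AddCircle.equivIoc 2 z).symm_apply_apply y

lemma vol_image {a b : ℝ} (hab2 : b - a < 2) {S : Set ℝ} (hS : S ⊆ Icc a b)
    (hm : MeasurableSet (cir '' S)) : volume (cir '' S) = volume S := by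
  have hm' : MeasurableSet (cir ⁻¹' (cir '' S)) := hm.preimage cir_continuous.measurable
  have key : cir ⁻¹' (cir '' S) ∩ Ioc (b - 2) (b - 2 + 2) = S := by
    ext t
    constructor
    · rintro ⟨⟨s, hs, hst⟩, ht⟩
      obtain ⟨k, hk⟩ := cir_eq_cir_iff.mp hst
      obtain ⟨hsa, hsb⟩ := hS hs
      obtain ⟨ht1, ht2⟩ := ht
      have h1 : (-1 : ℝ) < (k : ℝ) := by linarith
      have h2 : ((k : ℝ)) < 1 := by linarith
      have h1' : (-1 : ℤ) < k := by exact_mod_cast h1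
      have h2' : k < 1 := by exact_mod_cast h2
      have hk0 : k = 0 := by omega
      subst hk0
      simp only [Int.cast_zero, mul_zero, add_zero] at hk
      exact hk ▸ hs
    · intro hs
      obtain ⟨hsa, hsb⟩ := hS hs
      exact ⟨Set.mem_image_of_mem _ hs, ⟨by linarith, by linarith⟩⟩
  have h2 := (AddCircle.measurePreserving_mk (T := 2) (b - 2)).measure_preimage
    hm.nullMeasurableSet
  rw [show (QuotientAddGroup.mk ⁻¹' (cir '' S) : Set ℝ) = cir ⁻¹' (cir '' S) from rfl,
    Measure.restrict_apply hm', key] at h2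
  exact h2.symm

lemma cir_meas_Icc (a b : ℝ) : MeasurableSet (cir '' Icc a b) :=
  ((isCompact_Icc.image cir_continuous).isClosed).measurableSet

lemma vol_Icc {a b : ℝ} (h2 : b - a < 2) :
    volume (cir '' Icc a b) = ENNReal.ofReal (b - a) := by
  rw [vol_image h2 (subset_refl _) (cir_meas_Icc a b), Real.volume_Icc]

lemma cir_open_Ioo (a b : ℝ) : IsOpen (cir '' Ioo a b) :=
  QuotientAddGroup.isOpenMap_coe _ isOpen_Ioo

lemma vol_Ioo {a b : ℝ} (h2 : b - a < 2) :
    volume (cir '' Ioo a b) = ENNReal.ofReal (b - a) := by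
  rw [vol_image h2 Ioo_subset_Icc_self (cir_open_Ioo a b).measurableSet, Real.volume_Ioo]

lemma union_univ (τ : ℝ) : cir '' Icc (τ - 1) τ ∪ cir '' Icc τ (τ + 1) = univ := by
  ext x
  simp only [Set.mem_union, Set.mem_univ, iff_true]
  have h1 : ((AddCircle.equivIoc 2 (τ - 1) x : ℝ)) ∈ Ioc (τ - 1) (τ - 1 + 2) :=
    (AddCircle.equivIoc 2 (τ - 1) x).2
  set t := ((AddCircle.equivIoc 2 (τ - 1) x : ℝ)) with ht
  have h2 : cir t = x := cir_equivIoc (τ - 1) x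
  by_cases h : t ≤ τ
  · exact Or.inl ⟨t, ⟨h1.1.le, h⟩, h2⟩
  · exact Or.inr ⟨t, ⟨le_of_not_ge h, by linarith [h1.2]⟩, h2⟩

lemma arc_of_closed_connected {C : Set (AddCircle (2:ℝ))} (hcl : IsClosed C)
    (hconn : IsConnected C) (hne : C ≠ univ) :
    ∃ a b : ℝ, a ≤ b ∧ b - a < 2 ∧ C = cir '' Icc a b := by
  obtain ⟨x, hx⟩ : ∃ x, x ∉ C := by
    by_contra h; push_neg at h; exact hne (Set.eq_univ_of_forall h)
  set z : ℝ := ((AddCircle.equivIco 2 0 x : ℝ)) with hz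
  have hzx : cir z = x := cir_equivIco 0 x
  set g : AddCircle (2:ℝ) → ℝ := fun y => ((AddCircle.equivIco 2 z y : ℝ)) with hg'
  have hg : ∀ y, cir (g y) = y := fun y => cir_equivIco z y
  have hmem : ∀ y, g y ∈ Ico z (z + 2) := fun y => (AddCircle.equivIco 2 z y).2
  have hgz : ∀ y ∈ C, z < g y := by
    intro y hy
    rcases lt_or_eq_of_le (hmem y).1 with h | h
    · exact h
    · exfalso
      have hxy : x = y := by rw [← hzx]; unfold z at h ⊢; unfold g at h; rw [h]; exact hg y
      rw [hxy] at hx; exact hx hy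
  have hcont : ContinuousOn g C := by
    intro y hy
    have hyz : y ≠ ((z : ℝ) : AddCircle (2:ℝ)) := by
      intro h
      rw [show ((z : ℝ) : AddCircle (2:ℝ)) = cir z from rfl, hzx] at h
      rw [h] at hy; exact hx hy
    have := AddCircle.continuousAt_equivIco 2 z hyz
    exact (continuous_subtype_val.continuousAt.comp this).continuousWithinAt
  have hK : IsCompact (g '' C) := hcl.isCompact.image_of_continuousOn hcont
  have hKc : IsConnected (g '' C) := hconn.image g hcont
  have heq := eq_Icc_of_connected_compact hKc hK
  have hne' : (g '' C).Nonempty := hKc.nonempty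
  obtain ⟨y1, hy1, hgy1⟩ := hK.sInf_mem hne'
  obtain ⟨y2, hy2, hgy2⟩ := hK.sSup_mem hne'
  refine ⟨sInf (g '' C), sSup (g '' C), ?_, ?_, ?_⟩
  · exact csInf_le_csSup hne' hK.bddBelow hK.bddAbove
  · have ha := hgz y1 hy1
    have hb := (hmem y2).2
    rw [hgy1] at ha
    rw [hgy2] at hb
    linarith
  · rw [← heq]
    ext w
    constructor
    · intro hw; exact ⟨g w, ⟨w, hw, rfl⟩, hg w⟩
    · rintro ⟨r, ⟨w', hw', rfl⟩, rfl⟩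
      rw [hg w']; exact hw'

lemma ne_univ_aux {A B : Set (AddCircle (2:ℝ))} (hB : IsClosed B)
    (hi : interior A ∩ interior B = ∅) (hv : volume A = volume B) (hA : A = univ) :
    False := by
  have hc : volume Bᶜ = 0 := by
    rw [measure_compl hB.measurableSet (measure_ne_top _ _), ← hv, hA, tsub_self]
  have hBu : B = univ := by
    have := hB.isOpen_compl.eq_empty_of_measure_zero hc
    rwa [compl_empty_iff] at this
  rw [hA, hBu, interior_univ, Set.inter_self] at hi
  exact (Set.univ_nonempty).ne_empty hi

lemma vol_arc1 (τ : ℝ) : volume (cir '' Icc (τ - 1) τ) = ENNReal.ofReal 1 := by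
  rw [vol_Icc (by linarith)]; norm_num

lemma vol_arc2 (τ : ℝ) : volume (cir '' Icc τ (τ + 1)) = ENNReal.ofReal 1 := by
  rw [vol_Icc (by linarith)]; norm_num

lemma phi_mem (τ : ℝ) : PhiMap τ ∈ F22 := by
  refine ⟨((isCompact_Icc.image cir_continuous).isClosed),
    ((isCompact_Icc.image cir_continuous).isClosed), union_univ τ, ?_, ?_, ?_, ?_⟩
  · -- disjoint interiors via measure zero of the intersection
    have h := measure_union_add_inter (μ := (volume : Measure (AddCircle (2:ℝ))))
      (cir '' Icc (τ - 1) τ) (cir_meas_Icc τ (τ + 1))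
    rw [union_univ τ, vol_arc1 τ, vol_arc2 τ, AddCircle.measure_univ] at h
    have h12 : ENNReal.ofReal 1 + ENNReal.ofReal 1 = ENNReal.ofReal 2 := by
      rw [← ENNReal.ofReal_add] <;> norm_num
    rw [h12] at h
    nth_rewrite 2 [← add_zero (ENNReal.ofReal 2)] at h
    have hcap : volume (cir '' Icc (τ - 1) τ ∩ cir '' Icc τ (τ + 1)) = 0 :=
      (ENNReal.add_right_inj ENNReal.ofReal_ne_top).mp h
    exact (isOpen_interior.inter isOpen_interior).eq_empty_of_measure_zero
      (measure_mono_null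
        (Set.inter_subset_inter interior_subset interior_subset) hcap)
  · exact ⟨⟨cir τ, ⟨τ, ⟨by linarith, le_refl τ⟩, rfl⟩⟩,
      isPreconnected_Icc.image _ cir_continuous.continuousOn⟩
  · exact ⟨⟨cir τ, ⟨τ, ⟨le_refl τ, by linarith⟩, rfl⟩⟩,
      isPreconnected_Icc.image _ cir_continuous.continuousOn⟩
  · show volume (cir '' Icc (τ - 1) τ) = volume (cir '' Icc τ (τ + 1))
    rw [vol_arc1 τ, vol_arc2 τ]

lemma arcs_ne (τ : ℝ) : cir '' Icc (τ - 1) τ ≠ cir '' Icc τ (τ + 1) := by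
  intro hEq
  have hmem : cir (τ - 1/2) ∈ cir '' Icc τ (τ + 1) :=
    hEq ▸ ⟨τ - 1/2, ⟨by linarith, by linarith⟩, rfl⟩
  obtain ⟨s, hs, hcs⟩ := hmem
  obtain ⟨k, hk⟩ := cir_eq_cir_iff.mp hcs
  have h1 : (0 : ℝ) < k := by nlinarith [hs.1, hs.2]
  have h2 : ((k : ℝ)) < 1 := by nlinarith [hs.1, hs.2]
  have h1' : (0 : ℤ) < k := by exact_mod_cast h1
  have h2' : k < 1 := by exact_mod_cast h2
  omega

/-- `φ` descends to `S¹ = [−1,1]/(−1∼1)` and is a bijection from `S¹` onto `F₂(2)`. -/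
theorem phi_bijection :
    (∀ τ : ℝ, PhiMap τ ∈ F22) ∧
    (∀ τ τ' : ℝ, cir τ = cir τ' → PhiMap τ = PhiMap τ') ∧
    (∀ τ τ' : ℝ, PhiMap τ = PhiMap τ' → cir τ = cir τ') ∧
    (∀ q ∈ F22, ∃ τ : ℝ, PhiMap τ = q) := by
  refine ⟨phi_mem, ?_, ?_, ?_⟩
  · -- descends
    intro τ τ' h
    have h1 : cir (τ - 1) = cir (τ' - 1) := by
      obtain ⟨k, hk⟩ := cir_eq_cir_iff.mp h
      exact cir_eq_cir_iff.mpr ⟨k, by linarith⟩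
    have e1 : cir '' Icc (τ - 1) ((τ - 1) + 1) = cir '' Icc (τ' - 1) ((τ' - 1) + 1) :=
      image_Icc_of_eq h1 1
    have e2 : cir '' Icc τ (τ + 1) = cir '' Icc τ' (τ' + 1) := image_Icc_of_eq h 1
    unfold PhiMap
    rw [show τ - 1 + 1 = τ by ring, show τ' - 1 + 1 = τ' by ring] at e1
    rw [e1, e2]
  · -- injective
    intro τ τ' hP
    obtain ⟨e1, e2⟩ := Prod.ext_iff.mp hP
    simp only [PhiMap] at e1 e2
    have hm2 : cir τ' ∈ cir '' Icc τ (τ + 1) := by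
      rw [e2]; exact ⟨τ', ⟨le_refl _, by linarith⟩, rfl⟩
    have hm1 : cir τ' ∈ cir '' Icc (τ - 1) τ := by
      rw [e1]; exact ⟨τ', ⟨by linarith, le_refl _⟩, rfl⟩
    obtain ⟨s, hs, hcs⟩ := hm2
    obtain ⟨s', hs', hcs'⟩ := hm1
    obtain ⟨k, hk⟩ := cir_eq_cir_iff.mp (hcs.trans hcs'.symm)
    have h1 : (-1 : ℝ) < k := by nlinarith [hs.1, hs.2, hs'.1, hs'.2]
    have h2 : ((k : ℝ)) < 2 := by nlinarith [hs.1, hs.2, hs'.1, hs'.2]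
    have h1' : (-1 : ℤ) < k := by exact_mod_cast h1
    have h2' : k < 2 := by exact_mod_cast h2
    interval_cases k
    · -- k = 0 : s = s', so s = τ
      simp only [Int.cast_zero, mul_zero, add_zero] at hk
      have hsτ : s = τ := le_antisymm (hk ▸ hs'.2) hs.1
      rw [← hsτ, hcs]
    · -- k = 1 : s = τ + 1, contradiction
      exfalso
      simp only [Int.cast_one, mul_one] at hk
      have hsτ : s = τ + 1 := le_antisymm hs.2 (by linarith [hs'.1])
      have hτ' : cir τ' = cir (τ + 1) := by rw [← hcs, hsτ]
      have e3 : cir '' Icc τ' (τ' + 1) = cir '' Icc (τ + 1) ((τ + 1) + 1) :=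
        image_Icc_of_eq hτ' 1
      have e4 : cir '' Icc (τ + 1) (τ + 2) = cir '' Icc (τ - 1) τ := by
        have := image_Icc_shift (τ - 1) τ 1
        rwa [show τ - 1 + 2 * ((1:ℤ):ℝ) = τ + 1 by push_cast; ring,
          show τ + 2 * ((1:ℤ):ℝ) = τ + 2 by push_cast; ring] at this
      rw [show (τ + 1) + 1 = τ + 2 by ring, e4] at e3
      exact arcs_ne τ (e2.trans e3).symm
  · -- surjective
    rintro ⟨A, B⟩ ⟨hA, hB, hun, hint, hcA, hcB, hv⟩
    have hAne : A ≠ univ := fun h => ne_univ_aux hB hint hv h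
    have hBne : B ≠ univ := fun h =>
      ne_univ_aux hA (by rwa [Set.inter_comm] at hint) hv.symm h
    obtain ⟨a, b, hab, hab2, rfl⟩ := arc_of_closed_connected hA hcA hAne
    obtain ⟨c, d, hcd, hcd2, rfl⟩ := arc_of_closed_connected hB hcB hBne
    have vA := vol_Icc hab2
    have vB := vol_Icc hcd2
    -- sum of lengths ≥ 2
    have hge : (2 : ℝ) ≤ (b - a) + (d - c) := by
      have h1 : volume (univ : Set (AddCircle (2:ℝ)))
          ≤ volume (cir '' Icc a b) + volume (cir '' Icc c d) :=
        hun ▸ measure_union_le _ _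
      rw [AddCircle.measure_univ, vA, vB,
        ← ENNReal.ofReal_add (by linarith) (by linarith)] at h1
      exact (ENNReal.ofReal_le_ofReal_iff (by linarith)).mp h1
    -- open arcs inside the interiors
    have hUsub : cir '' Ioo a b ⊆ interior (cir '' Icc a b) :=
      (cir_open_Ioo a b).subset_interior_iff.mpr (Set.image_mono Ioo_subset_Icc_self)
    have hVsub : cir '' Ioo c d ⊆ interior (cir '' Icc c d) :=
      (cir_open_Ioo c d).subset_interior_iff.mpr (Set.image_mono Ioo_subset_Icc_self)
    have hdisj : Disjoint (cir '' Ioo a b) (cir '' Ioo c d) := by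
      rw [Set.disjoint_iff_inter_eq_empty]
      refine Set.eq_empty_of_subset_empty ?_
      rw [← hint]
      exact Set.inter_subset_inter hUsub hVsub
    -- sum of lengths ≤ 2
    have hle : (b - a) + (d - c) ≤ 2 := by
      have h1 : volume (cir '' Ioo a b) + volume (cir '' Ioo c d)
          ≤ volume (univ : Set (AddCircle (2:ℝ))) := by
        rw [← measure_union hdisj (cir_open_Ioo c d).measurableSet]
        exact measure_mono (Set.subset_univ _)
      rw [AddCircle.measure_univ, vol_Ioo hab2, vol_Ioo hcd2,
        ← ENNReal.ofReal_add (by linarith) (by linarith)] at h1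
      exact (ENNReal.ofReal_le_ofReal_iff (by norm_num)).mp h1
    have hvv : b - a = d - c := by
      rw [vA, vB] at hv
      exact (ENNReal.ofReal_eq_ofReal_iff (by linarith) (by linarith)).mp hv
    have hba : b - a = 1 := by linarith
    have hdc : d - c = 1 := by linarith
    -- show c ≡ b (mod 2)
    have hk : ∃ k : ℤ, c = b + 2 * k := by
      set k : ℤ := ⌊(c - b) / 2⌋ with hkdef
      set r : ℝ := c - b - 2 * k with hrdef
      have hfl := Int.floor_le ((c - b) / 2)
      have hfl2 := Int.lt_floor_add_one ((c - b) / 2)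
      have hr0 : 0 ≤ r := by rw [hrdef, hkdef]; linarith
      have hr2 : r < 2 := by rw [hrdef, hkdef]; linarith
      rcases eq_or_lt_of_le hr0 with h | h
      · exact ⟨k, by rw [hrdef] at h; linarith⟩
      · exfalso
        set t : ℝ := b + 1 + r / 2 with htdef
        have hmemV : cir t ∈ cir '' Ioo c d := by
          refine ⟨t + 2 * k, ⟨?_, ?_⟩, cir_shift t k⟩
          · rw [htdef, hrdef]; push_cast; linarith
          · rw [htdef, hrdef]; push_cast; linarith
        have hmemU : cir t ∈ cir '' Ioo a b := by
          refine ⟨t - 2, ⟨?_, ?_⟩, ?_⟩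
          · rw [htdef]; linarith
          · rw [htdef]; linarith
          · have := cir_shift (t - 2) 1
            rw [show t - 2 + 2 * ((1:ℤ):ℝ) = t by push_cast; ring] at this
            exact this.symm
        have : cir t ∈ interior (cir '' Icc a b) ∩ interior (cir '' Icc c d) :=
          ⟨hUsub hmemU, hVsub hmemV⟩
        rw [hint] at this
        exact this
    obtain ⟨k, hck⟩ := hk
    refine ⟨b, ?_⟩
    have hcb : cir c = cir b := cir_eq_cir_iff.mpr ⟨k, hck⟩
    have hIA : cir '' Icc (b - 1) b = cir '' Icc a b := by
      rw [show a = b - 1 by linarith]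
    have hIB : cir '' Icc b (b + 1) = cir '' Icc c d := by
      rw [show d = c + 1 by linarith]
      exact image_Icc_of_eq hcb.symm 1
    unfold PhiMap
    rw [hIA, hIB]
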